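/- If (λ, μ) is a Dyck pair, then the Dyck tiling of the skew shape μ \ λ is unique: there is exactly one set {P^1, ..., P^k} of Dyck paths partitioning μ \ λ such that any two are either nested (one covers the other) or distant. -/

import Mathlib

namespace ArcPaper

/-- The content of a tile `(r, c)` (row `r`, column `c`, both `1`-indexed). -/
def cont (t : ℕ × ℕ) : ℤ := (t.1 : ℤ) - (t.2 : ℤ)

/-- `r + c - 1`, so that the height of the tile `(r, c)` in the `m × n` rectangle is
`lev t - m`. -/
def lev (t : ℕ × ℕ) : ℤ := (t.1 : ℤ) + (t.2 : ℤ) - 1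

/-- The Young diagram of a partition `μ` (given as the function `r ↦ μ r`, `1`-indexed). -/
def diagram (μ : ℕ → ℕ) : Set (ℕ × ℕ) := {t | 1 ≤ t.1 ∧ 1 ≤ t.2 ∧ t.2 ≤ μ t.1}

/-- A partition in the `m × n` rectangle: weakly decreasing, parts `≤ m`, at most `n` rows. -/
def IsPtn (m n : ℕ) (μ : ℕ → ℕ) : Prop :=
  (∀ i j, 1 ≤ i → i ≤ j → μ j ≤ μ i) ∧ μ 1 ≤ m ∧ ∀ r, n < r → μ r = 0

/-- One step of a path: the next tile is `(r+1, c)` or `(r, c-1)`. -/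
def IsStep (a b : ℕ × ℕ) : Prop := b = (a.1 + 1, a.2) ∨ (2 ≤ a.2 ∧ b = (a.1, a.2 - 1))

/-- `S` is the tile set of a (representative of a) Dyck path with first content `f`, last
content `l`, and height `h`, inside the `m × n` rectangle. -/
def IsDyckRep (m : ℕ) (S : Set (ℕ × ℕ)) (f l h : ℤ) : Prop :=
  ∃ (s : ℕ) (hs : 0 < s) (p : Fin s → ℕ × ℕ),
    Function.Injective p ∧ Set.range p = S ∧
    (∀ i : Fin s, ∀ hi : i.1 + 1 < s, IsStep (p i) (p ⟨i.1 + 1, hi⟩)) ∧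
    (∀ i : Fin s, lev (p ⟨0, hs⟩) ≤ lev (p i)) ∧
    (∀ i : Fin s, lev (p ⟨s - 1, Nat.sub_lt hs Nat.one_pos⟩) ≤ lev (p i)) ∧
    cont (p ⟨0, hs⟩) = f ∧ cont (p ⟨s - 1, Nat.sub_lt hs Nat.one_pos⟩) = l ∧
    lev (p ⟨0, hs⟩) - (m : ℤ) = h

/-- `ν` is obtained from `μ` by removing a Dyck path with contents `[f, l]` and height `h`. -/
def RemovesH (m n : ℕ) (μ : ℕ → ℕ) (f l h : ℤ) (ν : ℕ → ℕ) : Prop :=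
  ∃ S : Set (ℕ × ℕ), IsDyckRep m S f l h ∧ S ⊆ diagram μ ∧ IsPtn m n ν ∧
    diagram ν = diagram μ \ S

/-- `ν` is obtained from `μ` by removing a Dyck path with contents `[f, l]`. -/
def Removes (m n : ℕ) (μ : ℕ → ℕ) (f l : ℤ) (ν : ℕ → ℕ) : Prop :=
  ∃ h, RemovesH m n μ f l h ν

/-- The Dyck path with contents `[f, l]` is removable from `μ`, with height `h`. -/
def DRemH (m n : ℕ) (μ : ℕ → ℕ) (f l h : ℤ) : Prop := ∃ ν, RemovesH m n μ f l h ν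

/-- The Dyck path with contents `[f, l]` is removable from `μ`. -/
def DRem (m n : ℕ) (μ : ℕ → ℕ) (f l : ℤ) : Prop := ∃ ν, Removes m n μ f l ν

/-- The Dyck path with contents `[f, l]` is addable to `μ`, with height `h`. -/
def DAddH (m n : ℕ) (μ : ℕ → ℕ) (f l h : ℤ) : Prop :=
  ∃ ν, IsPtn m n ν ∧ RemovesH m n ν f l h μ

/-- The Dyck path with contents `[f, l]` is addable to `μ`. -/
def DAdd (m n : ℕ) (μ : ℕ → ℕ) (f l : ℤ) : Prop := ∃ h, DAddH m n μ f l h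

/-- Two removable Dyck paths of `μ` commute: each remains removable after the other has been
removed. -/
def DyckCommute (m n : ℕ) (μ : ℕ → ℕ) (P Q : ℤ × ℤ) : Prop :=
  (∃ ν, Removes m n μ P.1 P.2 ν ∧ DRem m n ν Q.1 Q.2) ∧
  (∃ ν, Removes m n μ Q.1 Q.2 ν ∧ DRem m n ν P.1 P.2)

/-- `P ≺ Q`: the Dyck path `Q` covers `P`, i.e. `first(Q) < first(P)` and
`last(P) < last(Q)`. -/
def DyckLt (P Q : ℤ × ℤ) : Prop := Q.1 < P.1 ∧ P.2 < Q.2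

/-- Two Dyck paths (as content intervals) are adjacent: the disjoint union of their content
multisets is an interval. -/
def DyckAdj (P Q : ℤ × ℤ) : Prop := P.2 + 1 = Q.1 ∨ Q.2 + 1 = P.1

/-- Two Dyck paths (as content intervals) are distant: all their contents differ by `≥ 2`. -/
def DyckDistant (P Q : ℤ × ℤ) : Prop := P.2 + 2 ≤ Q.1 ∨ Q.2 + 2 ≤ P.1

/-- The breadth `b(P) = (last(P) - first(P))/2 + 1` of a Dyck path. -/
def brN (P : ℤ × ℤ) : ℕ := ((P.2 - P.1) / 2 + 1).toNat

/-- A Dyck tiling of the skew shape `mu \ lam`: a finite set `T` of Dyck paths (identified by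
their content intervals), together with a choice `S` of tile-set representatives, which
partition `mu \ lam` and are pairwise nested or distant. -/
def IsDyckTiling (m n : ℕ) (lam mu : ℕ → ℕ) (T : Finset (ℤ × ℤ))
    (S : ℤ × ℤ → Set (ℕ × ℕ)) : Prop :=
  (∀ q ∈ T, ∃ h, IsDyckRep m (S q) q.1 q.2 h) ∧
  (∀ q ∈ T, ∀ q' ∈ T, q ≠ q' → Disjoint (S q) (S q')) ∧
  ((⋃ q ∈ T, S q) = diagram mu \ diagram lam) ∧
  (∀ q ∈ T, ∀ q' ∈ T, q ≠ q' → DyckLt q q' ∨ DyckLt q' q ∨ DyckDistant q q')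

/-- The staircase partition `(d, d-1, …, 2, 1)` is contained in `μ`. -/
def HasStaircase (d : ℕ) (μ : ℕ → ℕ) : Prop := ∀ i, 1 ≤ i → i ≤ d → d + 1 - i ≤ μ i

/-- `μ` has defect `d - m`: `d` is maximal with the staircase `(d, …, 1)` contained in `μ`. -/
def DefectIs (m : ℕ) (μ : ℕ → ℕ) (d : ℕ) : Prop :=
  HasStaircase d μ ∧ ¬ HasStaircase (d + 1) μ

/-- A regular partition of the `m × n` rectangle: a partition of defect `0`. -/
def Regular (m n : ℕ) (μ : ℕ → ℕ) : Prop := IsPtn m n μ ∧ DefectIs m μ m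

/-- The conjugate partition: `conj n μ i` is the number of (the at most `n`) rows of `μ` with
at least `i` boxes. -/
def conj (n : ℕ) (μ : ℕ → ℕ) (i : ℕ) : ℕ := ((Finset.Icc 1 n).filter fun r => i ≤ μ r).card

/-- Point `j ∈ {1, …, m+n}` of the weight of `μ` is labelled `∧`. -/
def IsUpPt (m n : ℕ) (μ : ℕ → ℕ) (j : ℤ) : Prop :=
  ∃ i : ℕ, 1 ≤ i ∧ i ≤ m ∧ j = (m : ℤ) + 1 - (i : ℤ) + (conj n μ i : ℤ)

/-- The number of `∧`-labelled points in positions `[a, b]` of the weight of `μ`. -/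
noncomputable def upCount (m n : ℕ) (μ : ℕ → ℕ) (a b : ℤ) : ℕ :=
  {j : ℤ | a ≤ j ∧ j ≤ b ∧ IsUpPt m n μ j}.ncard

/-- The number of `∨`-labelled points in positions `[a, b]` of the weight of `μ`. -/
noncomputable def downCount (m n : ℕ) (μ : ℕ → ℕ) (a b : ℤ) : ℕ :=
  {j : ℤ | a ≤ j ∧ j ≤ b ∧ ¬ IsUpPt m n μ j}.ncard

/-- `(i, j)` is a cup of the cup diagram `μ̲`: point `i` is `∨`, point `j` is `∧`, and the
points strictly between `i` and `j` form a balanced, completely matched configuration. -/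
def IsCup (m n : ℕ) (μ : ℕ → ℕ) (i j : ℤ) : Prop :=
  1 ≤ i ∧ j ≤ (m : ℤ) + (n : ℤ) ∧ i < j ∧ ¬ IsUpPt m n μ i ∧ IsUpPt m n μ j ∧
  upCount m n μ (i + 1) (j - 1) = downCount m n μ (i + 1) (j - 1) ∧
  ∀ k : ℤ, i < k → k < j → upCount m n μ (i + 1) k ≤ downCount m n μ (i + 1) k

/-- `R = rt(Q)`: the maximal-breadth element of the set of addable Dyck paths of `lam` of
height `1` lying strictly to the right of `Q`. -/
def IsRt (m n : ℕ) (lam : ℕ → ℕ) (Q R : ℤ × ℤ) : Prop :=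
  DAddH m n lam R.1 R.2 1 ∧ Q.2 < R.1 ∧
  ∀ R' : ℤ × ℤ, DAddH m n lam R'.1 R'.2 1 → Q.2 < R'.1 → brN R' ≤ brN R

/-- `R = ⟨P ∪ Q⟩_μ`: the smallest removable Dyck path of `μ` containing `P ∪ Q`. -/
def IsMerge (m n : ℕ) (μ : ℕ → ℕ) (P Q R : ℤ × ℤ) : Prop :=
  DRem m n μ R.1 R.2 ∧ R.1 ≤ P.1 ∧ P.2 ≤ R.2 ∧ R.1 ≤ Q.1 ∧ Q.2 ≤ R.2 ∧
  ∀ R' : ℤ × ℤ, DRem m n μ R'.1 R'.2 → R'.1 ≤ P.1 → P.2 ≤ R'.2 → R'.1 ≤ Q.1 → Q.2 ≤ R'.2 →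
    R'.1 ≤ R.1 ∧ R.2 ≤ R'.2

end ArcPaper

open ArcPaper

lemma rep_facts {m : ℕ} {S : Set (ℕ × ℕ)} {f l h : ℤ}
    (hrep : IsDyckRep m S f l h) :
    f ≤ l ∧ (∀ t ∈ S, f ≤ cont t ∧ cont t ≤ l) ∧
    (∀ c, f ≤ c → c ≤ l → ∃! t, t ∈ S ∧ cont t = c) := by
  obtain ⟨s, hs, p, hinj, hrange, hstep, -, -, hf, hl, -⟩ := hrep
  have key : ∀ i (hi : i < s), cont (p ⟨i, hi⟩) = f + i := by
    intro i
    induction i with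
    | zero => intro hi; simpa using hf
    | succ i ih =>
      intro hi
      have hi' : i < s := Nat.lt_of_succ_lt hi
      have hst := hstep ⟨i, hi'⟩ hi
      have hc := ih hi'
      rcases hst with h1 | ⟨h2, h3⟩
      · rw [h1]; simp only [cont] at *; push_cast; omega
      · rw [h3]; simp only [cont] at *
        have : ((p ⟨i, hi'⟩).2 - 1 : ℕ) = ((p ⟨i, hi'⟩).2 : ℤ) - 1 := by omega
        simp only [this]; omega
  have hls : l = f + (s - 1 : ℕ) := by
    rw [← hl, key (s-1) (Nat.sub_lt hs Nat.one_pos)]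
  have hfl : f ≤ l := by
    rw [hls]; omega
  refine ⟨hfl, ?_, ?_⟩
  · intro t ht
    rw [← hrange] at ht
    obtain ⟨j, rfl⟩ := ht
    have := key j.1 j.2
    simp only [Fin.eta] at this
    rw [this, hls]
    have hj2 := j.2
    omega
  · intro c hfc hcl
    have hnn : 0 ≤ c - f := by omega
    have hi : (c - f).toNat < s := by
      rw [hls] at hcl; omega
    refine ⟨p ⟨(c-f).toNat, hi⟩, ⟨by rw [← hrange]; exact ⟨_, rfl⟩, by rw [key]; omega⟩, ?_⟩
    rintro t ⟨ht, hct⟩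
    rw [← hrange] at ht
    obtain ⟨j, rfl⟩ := ht
    have hj := key j.1 j.2
    simp only [Fin.eta] at hj
    have : j = ⟨(c-f).toNat, hi⟩ := by
      apply Fin.ext; simp; omega
    rw [this]


def cnt (T : Finset (ℤ × ℤ)) (c : ℤ) : ℕ :=
  (T.filter (fun q => q.1 ≤ c ∧ c ≤ q.2)).card

lemma cnt_pos {T : Finset (ℤ × ℤ)} {q : ℤ × ℤ} (hq : q ∈ T) {c : ℤ}
    (h1 : q.1 ≤ c) (h2 : c ≤ q.2) : 1 ≤ cnt T c :=
  Finset.card_pos.mpr ⟨q, Finset.mem_filter.mpr ⟨hq, h1, h2⟩⟩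

lemma laminar_eq : ∀ (k : ℕ) (T T' : Finset (ℤ × ℤ)), T.card = k →
    (∀ q ∈ T, q.1 ≤ q.2) → (∀ q ∈ T', q.1 ≤ q.2) →
    (∀ q ∈ T, ∀ q' ∈ T, q ≠ q' → DyckLt q q' ∨ DyckLt q' q ∨ DyckDistant q q') →
    (∀ q ∈ T', ∀ q' ∈ T', q ≠ q' → DyckLt q q' ∨ DyckLt q' q ∨ DyckDistant q q') →
    (∀ c, cnt T c = cnt T' c) → T = T' := by
  intro k
  induction k with
  | zero =>
    intro T T' hcard hne1 hne1' hlam hlam' hcnt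
    rw [Finset.card_eq_zero] at hcard
    subst hcard
    by_contra hne
    obtain ⟨q', hq'⟩ := Finset.nonempty_iff_ne_empty.mpr (fun h => hne h.symm)
    have h1 : 1 ≤ cnt T' q'.1 := cnt_pos hq' le_rfl (hne1' q' hq')
    have h0 : cnt (∅ : Finset (ℤ × ℤ)) q'.1 = 0 := by simp [cnt]
    have := hcnt q'.1
    omega
  | succ k ih =>
    intro T T' hcard hne1 hne1' hlam hlam' hcnt
    have hTne : T.Nonempty := Finset.card_pos.mp (by omega)
    -- minimal left endpoints
    classical
    obtain ⟨q, hqT, hqmin⟩ := T.exists_min_image Prod.fst hTne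
    have hT'ne : T'.Nonempty := by
      have := hcnt q.1
      have h1 : 1 ≤ cnt T q.1 := cnt_pos hqT le_rfl (hne1 q hqT)
      rw [this] at h1
      obtain ⟨r, hr⟩ := Finset.card_pos.mp h1
      exact ⟨r, (Finset.mem_filter.mp hr).1⟩
    obtain ⟨q', hqT', hqmin'⟩ := T'.exists_min_image Prod.fst hT'ne
    -- equal left endpoints
    have hmm : q.1 = q'.1 := by
      have ha : 1 ≤ cnt T q.1 := cnt_pos hqT le_rfl (hne1 q hqT)
      have hb : 1 ≤ cnt T' q'.1 := cnt_pos hqT' le_rfl (hne1' q' hqT')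
      have ea := hcnt q.1
      have eb := hcnt q'.1
      have ha' : 0 < cnt T' q.1 := by omega
      have hb' : 0 < cnt T q'.1 := by omega
      obtain ⟨r, hr⟩ := Finset.card_pos.mp ha'
      have hr' := Finset.mem_filter.mp hr
      obtain ⟨u, hu⟩ := Finset.card_pos.mp hb'
      have hu' := Finset.mem_filter.mp hu
      have m1 := hqmin' r hr'.1
      have m2 := hqmin u hu'.1
      have := hr'.2.1
      have := hu'.2.1
      omega
    -- right endpoint characterization
    have key : ∀ (U : Finset (ℤ × ℤ)) (r : ℤ × ℤ), r ∈ U →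
        (∀ u ∈ U, u.1 ≤ u.2) →
        (∀ u ∈ U, ∀ u' ∈ U, u ≠ u' → DyckLt u u' ∨ DyckLt u' u ∨ DyckDistant u u') →
        (∀ u ∈ U, r.1 ≤ u.1) → cnt U (r.2 + 1) = 0 := by
      intro U r hrU hneU hlamU hminU
      rw [cnt, Finset.card_eq_zero, Finset.filter_eq_empty_iff]
      rintro u huU ⟨ha, hb⟩
      have hru : r ≠ u := by
        intro h; subst h; omega
      have h1 := hminU u huU
      have h2 := hneU u huU
      rcases hlamU r hrU u huU hru with ⟨h3, h4⟩ | ⟨h3, h4⟩ | h3 | h3 <;>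
        simp only [DyckLt, DyckDistant] at * <;> omega
    have hq12 := hne1 q hqT
    have hq12' := hne1' q' hqT'
    have hq2 : q.2 = q'.2 := by
      by_contra hne2
      rcases lt_or_gt_of_ne hne2 with h | h
      · have h0 := key T q hqT hne1 hlam hqmin
        have h1 : 1 ≤ cnt T' (q.2+1) := cnt_pos hqT' (by omega) (by omega)
        rw [← hcnt] at h1; omega
      · have h0 := key T' q' hqT' hne1' hlam' hqmin'
        have h1 : 1 ≤ cnt T (q'.2+1) := cnt_pos hqT (by omega) (by omega)
        rw [hcnt] at h1; omega
    have hqq : q = q' := Prod.ext hmm hq2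
    subst hqq
    -- erase and recurse
    have hcnt' : ∀ c, cnt (T.erase q) c = cnt (T'.erase q) c := by
      intro c
      have e1 : (T.erase q).filter (fun r => r.1 ≤ c ∧ c ≤ r.2)
          = (T.filter (fun r => r.1 ≤ c ∧ c ≤ r.2)).erase q := by
        rw [Finset.filter_erase]
      have e2 : (T'.erase q).filter (fun r => r.1 ≤ c ∧ c ≤ r.2)
          = (T'.filter (fun r => r.1 ≤ c ∧ c ≤ r.2)).erase q := by
        rw [Finset.filter_erase]
      simp only [cnt, e1, e2]
      by_cases hc : q.1 ≤ c ∧ c ≤ q.2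
      · rw [Finset.card_erase_of_mem (Finset.mem_filter.mpr ⟨hqT, hc⟩),
          Finset.card_erase_of_mem (Finset.mem_filter.mpr ⟨hqT', hc⟩)]
        have := hcnt c
        simp only [cnt] at this
        omega
      · rw [Finset.erase_eq_of_notMem, Finset.erase_eq_of_notMem]
        · exact hcnt c
        · intro h; exact hc (Finset.mem_filter.mp h).2
        · intro h; exact hc (Finset.mem_filter.mp h).2
    have hrec := ih (T.erase q) (T'.erase q)
      (by rw [Finset.card_erase_of_mem hqT]; omega)
      (fun r hr => hne1 r (Finset.mem_of_mem_erase hr))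
      (fun r hr => hne1' r (Finset.mem_of_mem_erase hr))
      (fun r hr r' hr' => hlam r (Finset.mem_of_mem_erase hr) r' (Finset.mem_of_mem_erase hr'))
      (fun r hr r' hr' => hlam' r (Finset.mem_of_mem_erase hr) r' (Finset.mem_of_mem_erase hr'))
      hcnt'
    ext x
    by_cases hx : x = q
    · subst hx; simp [hqT, hqT']
    · constructor <;> intro hmem
      · exact Finset.mem_of_mem_erase (hrec ▸ Finset.mem_erase.mpr ⟨hx, hmem⟩)
      · exact Finset.mem_of_mem_erase (hrec ▸ Finset.mem_erase.mpr ⟨hx, hmem⟩)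


lemma cnt_le {m n : ℕ} {lam mu : ℕ → ℕ} {T T' : Finset (ℤ × ℤ)}
    {S S' : ℤ × ℤ → Set (ℕ × ℕ)}
    (h1 : IsDyckTiling m n lam mu T S) (h2 : IsDyckTiling m n lam mu T' S') (c : ℤ) :
    cnt T c ≤ cnt T' c := by
  classical
  obtain ⟨hrep1, hdisj1, huni1, -⟩ := h1
  obtain ⟨hrep2, hdisj2, huni2, -⟩ := h2
  have hex : ∀ q : ℤ × ℤ, ∃ t : ℕ × ℕ,
      (q ∈ T ∧ q.1 ≤ c ∧ c ≤ q.2) → t ∈ S q ∧ cont t = c := by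
    intro q
    by_cases hq : q ∈ T ∧ q.1 ≤ c ∧ c ≤ q.2
    · obtain ⟨h, hrep⟩ := hrep1 q hq.1
      obtain ⟨t, ht, -⟩ := (rep_facts hrep).2.2 c hq.2.1 hq.2.2
      exact ⟨t, fun _ => ht⟩
    · exact ⟨(0,0), fun h => absurd h hq⟩
  choose tile htile using hex
  have hex2 : ∀ t : ℕ × ℕ, ∃ q' : ℤ × ℤ,
      t ∈ diagram mu \ diagram lam → q' ∈ T' ∧ t ∈ S' q' := by
    intro t
    by_cases ht : t ∈ diagram mu \ diagram lam
    · rw [← huni2] at ht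
      simp only [Set.mem_iUnion] at ht
      obtain ⟨q', hq', htq⟩ := ht
      exact ⟨q', fun _ => ⟨hq', htq⟩⟩
    · exact ⟨(0,0), fun h => absurd h ht⟩
  choose g hg using hex2
  apply Finset.card_le_card_of_injOn (fun q => g (tile q))
  · intro q hq
    rw [Finset.mem_coe, Finset.mem_filter] at hq ⊢
    obtain ⟨hqT, hq1, hq2⟩ := hq
    have ht := htile q ⟨hqT, hq1, hq2⟩
    have htsk : tile q ∈ diagram mu \ diagram lam := by
      rw [← huni1]
      exact Set.mem_iUnion₂.mpr ⟨q, hqT, ht.1⟩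
    obtain ⟨hgT, hgS⟩ := hg (tile q) htsk
    obtain ⟨h', hrep'⟩ := hrep2 _ hgT
    have hin := (rep_facts hrep').2.1 _ hgS
    rw [ht.2] at hin
    exact ⟨hgT, hin⟩
  · intro q1 hq1 q2 hq2 heq
    simp only [Finset.coe_filter, Set.mem_setOf_eq] at hq1 hq2
    by_contra hne
    have ht1 := htile q1 ⟨hq1.1, hq1.2⟩
    have ht2 := htile q2 ⟨hq2.1, hq2.2⟩
    have hsk1 : tile q1 ∈ diagram mu \ diagram lam := by
      rw [← huni1]; exact Set.mem_iUnion₂.mpr ⟨q1, hq1.1, ht1.1⟩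
    have hsk2 : tile q2 ∈ diagram mu \ diagram lam := by
      rw [← huni1]; exact Set.mem_iUnion₂.mpr ⟨q2, hq2.1, ht2.1⟩
    obtain ⟨hg1T, hg1S⟩ := hg _ hsk1
    obtain ⟨hg2T, hg2S⟩ := hg _ hsk2
    simp only at heq
    rw [← heq] at hg2S
    obtain ⟨h', hrep'⟩ := hrep2 _ hg1T
    have hfacts := rep_facts hrep'
    have hc1 := hfacts.2.1 _ hg1S
    rw [ht1.2] at hc1
    obtain ⟨t0, -, huniq⟩ := hfacts.2.2 c hc1.1 hc1.2
    have e1 : tile q1 = t0 := huniq _ ⟨hg1S, ht1.2⟩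
    have e2 : tile q2 = t0 := huniq _ ⟨hg2S, ht2.2⟩
    have hmem : tile q1 ∈ S q2 := by rw [e1, ← e2]; exact ht2.1
    exact Set.disjoint_left.mp (hdisj1 q1 hq1.1 q2 hq2.1 hne) ht1.1 hmem


/-- If `(lam, mu)` is a Dyck pair, then the Dyck tiling of the skew shape `mu \ lam` is
unique: any two sets of Dyck paths (identified by their content intervals) partitioning
`mu \ lam` such that any two distinct members are nested or distant, coincide. -/
theorem stmt13 (m n : ℕ) (lam mu : ℕ → ℕ)
    (hlam : IsPtn m n lam) (hmu : IsPtn m n mu) (hsub : diagram lam ⊆ diagram mu)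
    (T T' : Finset (ℤ × ℤ)) (S S' : ℤ × ℤ → Set (ℕ × ℕ))
    (h1 : IsDyckTiling m n lam mu T S) (h2 : IsDyckTiling m n lam mu T' S') :
    T = T' := by
  have hcnt : ∀ c, cnt T c = cnt T' c := fun c =>
    le_antisymm (cnt_le h1 h2 c) (cnt_le h2 h1 c)
  have hne1 : ∀ q ∈ T, q.1 ≤ q.2 := by
    intro q hq; obtain ⟨h, hrep⟩ := h1.1 q hq; exact (rep_facts hrep).1
  have hne1' : ∀ q ∈ T', q.1 ≤ q.2 := by
    intro q hq; obtain ⟨h, hrep⟩ := h2.1 q hq; exact (rep_facts hrep).1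
  exact laminar_eq T.card T T' rfl hne1 hne1' h1.2.2.2 h2.2.2.2 hcnt
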